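/- There is an absolute constant c > 0 such that for every integer ℓ ≥ 2 and all reals ρ_1, …, ρ_{ℓ+1} ∈ [0,1] with ρ_{ℓ+1} = 1, setting x_i = ρ_1 + ρ_2 + … + ρ_i for 1 ≤ i ≤ ℓ+1, one has Σ_{i=1}^{ℓ+1} ρ_i²/(1+x_i)² ≥ c·(ln ℓ)²/ℓ. -/

import Mathlib

private lemma log_step (a r : ℝ) (ha : 0 ≤ a) (h0 : 0 ≤ r) (h1 : r ≤ 1) :
    Real.log (1 + (a + r)) - Real.log (1 + a) ≤ 2 * (r / (1 + (a + r))) := by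
  have hpa : (0:ℝ) < 1 + a := by linarith
  have hpb : (0:ℝ) < 1 + (a + r) := by linarith
  have hq : Real.log (1 + (a + r)) - Real.log (1 + a)
      = Real.log ((1 + (a + r)) / (1 + a)) := by
    rw [Real.log_div hpb.ne' hpa.ne']
  rw [hq]
  have hlog := Real.log_le_sub_one_of_pos (div_pos hpb hpa)
  have h2 : (1 + (a + r)) / (1 + a) - 1 = r / (1 + a) := by
    field_simp
    ring
  have h3 : r / (1 + a) ≤ 2 * (r / (1 + (a + r))) := by
    rw [← mul_div_assoc, div_le_div_iff₀ hpa hpb]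
    nlinarith
  linarith [hlog, h2 ▸ hlog]

private lemma telescope (ρ : ℕ → ℝ) (n : ℕ)
    (h : ∀ i, 1 ≤ i → i ≤ n → ρ i ∈ Set.Icc (0:ℝ) 1) :
    Real.log (1 + ∑ j ∈ Finset.Icc 1 n, ρ j) ≤
      2 * ∑ i ∈ Finset.Icc 1 n, ρ i / (1 + ∑ j ∈ Finset.Icc 1 i, ρ j) := by
  induction n with
  | zero => simp
  | succ n ih =>
    have h' : ∀ i, 1 ≤ i → i ≤ n → ρ i ∈ Set.Icc (0:ℝ) 1 := fun i h1 h2 =>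
      h i h1 (le_trans h2 (Nat.le_succ n))
    have hn := h (n+1) (Nat.le_add_left 1 n) le_rfl
    have ha : 0 ≤ ∑ j ∈ Finset.Icc 1 n, ρ j :=
      Finset.sum_nonneg fun j hj => by
        have := Finset.mem_Icc.mp hj
        exact (h' j this.1 this.2).1
    have hsum : ∑ j ∈ Finset.Icc 1 (n+1), ρ j
        = (∑ j ∈ Finset.Icc 1 n, ρ j) + ρ (n+1) :=
      Finset.sum_Icc_succ_top (Nat.le_add_left 1 n) ρ
    have hsum2 : ∑ i ∈ Finset.Icc 1 (n+1), ρ i / (1 + ∑ j ∈ Finset.Icc 1 i, ρ j)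
        = (∑ i ∈ Finset.Icc 1 n, ρ i / (1 + ∑ j ∈ Finset.Icc 1 i, ρ j))
          + ρ (n+1) / (1 + ∑ j ∈ Finset.Icc 1 (n+1), ρ j) :=
      Finset.sum_Icc_succ_top (Nat.le_add_left 1 n) _
    have hstep := log_step (∑ j ∈ Finset.Icc 1 n, ρ j) (ρ (n+1)) ha hn.1 hn.2
    rw [hsum2, hsum]
    have := ih h'
    linarith [hstep, this]

/-- For reals `ρ_1, …, ρ_{ℓ+1} ∈ [0,1]` with `ρ_{ℓ+1} = 1` and partial sums
`x_i = ρ_1 + … + ρ_i`, the sum `Σ ρ_i²/(1+x_i)²` is at least `c·(ln ℓ)²/ℓ`. -/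
theorem sum_sq_partial_lower_bound :
    ∃ c : ℝ, 0 < c ∧
      ∀ (ℓ : ℕ), 2 ≤ ℓ →
      ∀ ρ : ℕ → ℝ,
        (∀ i, 1 ≤ i → i ≤ ℓ + 1 → ρ i ∈ Set.Icc (0 : ℝ) 1) →
        ρ (ℓ + 1) = 1 →
        c * (Real.log ℓ) ^ 2 / ℓ ≤
          ∑ i ∈ Finset.Icc 1 (ℓ + 1),
            (ρ i) ^ 2 / (1 + ∑ j ∈ Finset.Icc 1 i, ρ j) ^ 2 := by
  refine ⟨1/64, by norm_num, ?_⟩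
  intro ℓ hℓ ρ hρ hlast
  set x : ℕ → ℝ := fun i => ∑ j ∈ Finset.Icc 1 i, ρ j with hx
  have hL1 : (1:ℝ) ≤ (ℓ:ℝ) := by exact_mod_cast Nat.one_le_of_lt hℓ
  have hL0 : (0:ℝ) < (ℓ:ℝ) := by linarith
  have hlogL : 0 ≤ Real.log ℓ := Real.log_nonneg hL1
  -- x ℓ ≥ 0
  have hxl0 : 0 ≤ x ℓ :=
    Finset.sum_nonneg fun j hj => by
      have hmem := Finset.mem_Icc.mp hj
      exact (hρ j hmem.1 (le_trans hmem.2 (Nat.le_succ ℓ))).1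
  -- split off the top term
  have hsplit : ∑ i ∈ Finset.Icc 1 (ℓ + 1), (ρ i) ^ 2 / (1 + x i) ^ 2
      = (∑ i ∈ Finset.Icc 1 ℓ, (ρ i) ^ 2 / (1 + x i) ^ 2)
        + (ρ (ℓ+1)) ^ 2 / (1 + x (ℓ+1)) ^ 2 :=
    Finset.sum_Icc_succ_top (Nat.le_add_left 1 ℓ) _
  have hxtop : x (ℓ+1) = x ℓ + 1 := by
    have := Finset.sum_Icc_succ_top (Nat.le_add_left 1 ℓ) ρ
    simpa [hx, hlast] using this
  have hAnn : 0 ≤ ∑ i ∈ Finset.Icc 1 ℓ, (ρ i) ^ 2 / (1 + x i) ^ 2 :=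
    Finset.sum_nonneg fun i _ => div_nonneg (sq_nonneg _) (sq_nonneg _)
  -- key: (log ℓ)^4 ≤ 256 ℓ
  have hkey4 : (Real.log ℓ) ^ 4 ≤ 256 * (ℓ:ℝ) := by
    set u := Real.log ℓ with hu
    have h1 : 1 + u/4 ≤ Real.exp (u/4) := by linarith [Real.add_one_le_exp (u/4)]
    have h2 : (1 + u/4) ^ 4 ≤ (Real.exp (u/4)) ^ 4 := by
      apply pow_le_pow_left₀ (by linarith) h1
    have h3 : (Real.exp (u/4)) ^ 4 = (ℓ:ℝ) := by
      rw [← Real.exp_nat_mul]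
      norm_num
      rw [show (4:ℝ) * (u/4) = u by ring, hu, Real.exp_log hL0]
    nlinarith [sq_nonneg u, sq_nonneg (u - 4), hlogL]
  rw [hsplit]
  by_cases hcase : (1 + x ℓ) ^ 4 < (ℓ:ℝ)
  · -- case A: last term is big
    have hlastterm : (ρ (ℓ+1)) ^ 2 / (1 + x (ℓ+1)) ^ 2 = 1 / (2 + x ℓ) ^ 2 := by
      rw [hlast, hxtop]; ring_nf
    have h2x : (2 + x ℓ) ^ 4 ≤ 16 * (1 + x ℓ) ^ 4 := by nlinarith [sq_nonneg (x ℓ), sq_nonneg (1 + x ℓ), sq_nonneg (2 + x ℓ)]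
    have hA : (Real.log ℓ)^2 * (2 + x ℓ)^2 ≤ 64 * (ℓ:ℝ) := by
      have hsq : ((Real.log ℓ)^2 * (2 + x ℓ)^2)^2 ≤ (64 * (ℓ:ℝ))^2 := by
        have : ((Real.log ℓ)^2 * (2 + x ℓ)^2)^2 = (Real.log ℓ)^4 * (2 + x ℓ)^4 := by ring
        rw [this]
        have h4 : (2 + x ℓ) ^ 4 ≤ 16 * (ℓ:ℝ) := by nlinarith
        calc (Real.log ℓ)^4 * (2 + x ℓ)^4 ≤ (256 * (ℓ:ℝ)) * (16 * (ℓ:ℝ)) := by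
              apply mul_le_mul hkey4 h4 (by positivity) (by positivity)
          _ = (64 * (ℓ:ℝ))^2 := by ring
      have hnn : 0 ≤ (Real.log ℓ)^2 * (2 + x ℓ)^2 := by positivity
      nlinarith
    have hpos2 : (0:ℝ) < (2 + x ℓ)^2 := by positivity
    have : (1/64) * (Real.log ℓ) ^ 2 / (ℓ:ℝ) ≤ 1 / (2 + x ℓ) ^ 2 := by
      rw [div_le_div_iff₀ hL0 hpos2]
      nlinarith
    rw [hlastterm]
    linarith
  · -- case B: Cauchy–Schwarz
    push_neg at hcase
    have hxpos : (0:ℝ) < 1 + x ℓ := by linarith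
    have hlogx : Real.log ℓ / 4 ≤ Real.log (1 + x ℓ) := by
      have := Real.log_le_log hL0 hcase
      rw [Real.log_pow] at this
      push_cast at this
      linarith
    have htel := telescope ρ ℓ (fun i h1 h2 => hρ i h1 (le_trans h2 (Nat.le_succ ℓ)))
    set T := ∑ i ∈ Finset.Icc 1 ℓ, ρ i / (1 + x i) with hT
    have htel' : Real.log (1 + x ℓ) ≤ 2 * T := htel
    have hT8 : Real.log ℓ / 8 ≤ T := by linarith
    have hcs := sq_sum_le_card_mul_sum_sq (s := Finset.Icc 1 ℓ)
      (f := fun i => ρ i / (1 + x i))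
    have hcard : (Finset.Icc 1 ℓ).card = ℓ := by
      simp
    rw [hcard] at hcs
    have heq : ∑ i ∈ Finset.Icc 1 ℓ, (ρ i / (1 + x i)) ^ 2
        = ∑ i ∈ Finset.Icc 1 ℓ, (ρ i) ^ 2 / (1 + x i) ^ 2 := by
      apply Finset.sum_congr rfl
      intro i _
      rw [div_pow]
    rw [heq] at hcs
    have hT2 : (Real.log ℓ / 8)^2 ≤ T^2 := by
      apply pow_le_pow_left₀ (by positivity) hT8
    have hlt : 0 ≤ (ρ (ℓ+1)) ^ 2 / (1 + x (ℓ+1)) ^ 2 :=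
      div_nonneg (sq_nonneg _) (sq_nonneg _)
    have hfinal : (1/64) * (Real.log ℓ) ^ 2 / (ℓ:ℝ)
        ≤ ∑ i ∈ Finset.Icc 1 ℓ, (ρ i) ^ 2 / (1 + x i) ^ 2 := by
      rw [div_le_iff₀ hL0] at *
      nlinarith
    linarith
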